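/- In the free group F_k (k ≥ 2), with χ_n = ∑_{|x|=n} x in ℂ[F_k], one has χ_n = p_n(χ_1) for all n ≥ 0, where p_n is defined by p_0 = 1, p_1 = z, p_2 = z² − 2k, p_{n+1} = z·p_n − (2k−1)·p_{n−1} (n ≥ 2), evaluated in the commutative subring generated by χ_0 and χ_1. -/

import Mathlib

/-- The sphere of radius `n` about the identity in the free group `F_k`:
the finite set of elements of reduced word length `n`. -/
noncomputable def sphere (k n : ℕ) : Finset (FreeGroup (Fin k)) :=
  (Set.Finite.preimage (Function.Injective.injOn FreeGroup.toWord_injective)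
    (List.finite_length_eq ((Fin k) × Bool) n)).toFinset

/-- `χ_n = ∑_{|x| = n} x`, the sum of the sphere of radius `n` in `ℂ[F_k]`. -/
noncomputable def chi (k n : ℕ) : MonoidAlgebra ℂ (FreeGroup (Fin k)) :=
  ∑ x ∈ sphere k n, MonoidAlgebra.of ℂ (FreeGroup (Fin k)) x

/-- The polynomials `p_0 = 1`, `p_1 = z`, `p_2 = z² - 2k`,
`p_{n+1} = z p_n - (2k-1) p_{n-1}` for `n ≥ 2`. -/
noncomputable def p (k : ℕ) : ℕ → Polynomial ℂ
  | 0 => 1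
  | 1 => Polynomial.X
  | 2 => Polynomial.X ^ 2 - Polynomial.C ((2 * k : ℕ) : ℂ)
  | (n + 3) => Polynomial.X * p k (n + 2) - Polynomial.C ((2 * k - 1 : ℕ) : ℂ) * p k (n + 1)

/-- `e_0 = 1` and `e_n = 2k(2k-1)^{n-1}` for `n ≥ 1`, the cardinality of the sphere. -/
def eN (k n : ℕ) : ℕ := if n = 0 then 1 else 2 * k * (2 * k - 1) ^ (n - 1)

noncomputable def listSet (k m : ℕ) : Finset (List (Fin k × Bool)) :=
  ((List.finite_length_eq ((Fin k) × Bool) m).toFinset).filter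
    (fun L => FreeGroup.reduce L = L)

lemma mem_listSet {k m : ℕ} {L : List (Fin k × Bool)} :
    L ∈ listSet k m ↔ L.length = m ∧ FreeGroup.reduce L = L := by
  simp [listSet, Set.Finite.mem_toFinset]

lemma mem_sphere_iff {k n : ℕ} {x : FreeGroup (Fin k)} :
    x ∈ sphere k n ↔ x.toWord.length = n := by
  simp [sphere, Set.Finite.mem_toFinset]

lemma reduced_cons_iff {k : ℕ} {d : Fin k × Bool} {L : List (Fin k × Bool)} :
    FreeGroup.reduce (d :: L) = d :: L ↔
      FreeGroup.reduce L = L ∧ ∀ e ∈ L.head?, ¬(d.1 = e.1 ∧ d.2 = !e.2) := by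
  constructor
  · intro h
    rcases hr : FreeGroup.reduce L with _ | ⟨e, t⟩
    · rw [FreeGroup.reduce.cons, hr] at h
      have h' : [d] = d :: L := h
      have hL : L = [] := by simpa using h'.symm
      subst hL
      simpa using hr
    · rw [FreeGroup.reduce.cons, hr] at h
      have h' : (if d.1 = e.1 ∧ d.2 = !e.2 then t else d :: e :: t) = d :: L := h
      by_cases hc : d.1 = e.1 ∧ d.2 = !e.2
      · rw [if_pos hc] at h'
        have h1 : (FreeGroup.reduce L).length ≤ L.length :=
          FreeGroup.Red.length_le FreeGroup.reduce.red
        rw [hr] at h1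
        have h2 := congrArg List.length h'
        simp at h1 h2
        omega
      · rw [if_neg hc] at h'
        have hL : L = e :: t := by
          have := h'.symm
          simpa using this
        subst hL
        refine ⟨rfl, ?_⟩
        intro e' he'
        simp at he'
        subst he'
        exact hc
  · rintro ⟨h1, h2⟩
    rw [FreeGroup.reduce.cons, h1]
    cases L with
    | nil => rfl
    | cons e t =>
      have := h2 e (by simp)
      show (if d.1 = e.1 ∧ d.2 = !e.2 then t else d :: e :: t) = d :: e :: t
      simp only [if_neg this]

lemma mk_cons_cancel {k : ℕ} (c : Fin k × Bool) (T : List (Fin k × Bool)) :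
    FreeGroup.mk (c :: (c.1, !c.2) :: T) = FreeGroup.mk T := by
  have h1 : FreeGroup.mk (c :: (c.1, !c.2) :: T)
      = FreeGroup.mk [c] * FreeGroup.mk [(c.1, !c.2)] * FreeGroup.mk T := by
    rw [FreeGroup.mul_mk, FreeGroup.mul_mk]
    rfl
  have h2 : FreeGroup.mk [(c.1, !c.2)] = (FreeGroup.mk [c])⁻¹ := by
    rw [FreeGroup.inv_mk]; simp [FreeGroup.invRev]
  rw [h1, h2, mul_inv_cancel, one_mul]

lemma chi_eq (k m : ℕ) :
    chi k m = ∑ L ∈ listSet k m, MonoidAlgebra.of ℂ (FreeGroup (Fin k)) (FreeGroup.mk L) := by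
  unfold chi
  refine Finset.sum_bij' (fun x _ => FreeGroup.toWord x) (fun L _ => FreeGroup.mk L) ?_ ?_ ?_ ?_ ?_
  · intro x hx
    exact mem_listSet.mpr ⟨mem_sphere_iff.mp hx, FreeGroup.reduce_toWord x⟩
  · intro L hL
    rw [mem_sphere_iff, FreeGroup.toWord_mk, (mem_listSet.mp hL).2]
    exact (mem_listSet.mp hL).1
  · intro x _; exact FreeGroup.mk_toWord
  · intro L hL
    have h2 := (mem_listSet.mp hL).2
    simp only [FreeGroup.toWord_mk, h2]
  · intro x _; rw [FreeGroup.mk_toWord]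

lemma listSet_zero (k : ℕ) : listSet k 0 = {[]} := by
  ext L; simp [mem_listSet, List.length_eq_zero_iff]
  rintro rfl; rfl

lemma chi_zero (k : ℕ) : chi k 0 = 1 := by
  rw [chi_eq, listSet_zero, Finset.sum_singleton, ← FreeGroup.one_eq_mk, map_one]

lemma chi_one (k : ℕ) :
    chi k 1 = ∑ c : Fin k × Bool, MonoidAlgebra.of ℂ (FreeGroup (Fin k)) (FreeGroup.mk [c]) := by
  rw [chi_eq]
  have h : listSet k 1 = Finset.univ.image (fun c : Fin k × Bool => [c]) := by
    ext L
    simp only [mem_listSet, Finset.mem_image, Finset.mem_univ, true_and]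
    constructor
    · rintro ⟨h1, -⟩
      rcases List.length_eq_one_iff.mp h1 with ⟨c, rfl⟩
      exact ⟨c, rfl⟩
    · rintro ⟨c, rfl⟩
      exact ⟨rfl, rfl⟩
  rw [h, Finset.sum_image (by intro a _ b _ h; simpa using h)]

lemma head?_cons_eq {γ : Type*} {L : List γ} {e : γ} (h : L.head? = some e) :
    L = e :: L.tail := by
  cases L <;> simp_all

lemma key (k m : ℕ) (hm : 1 ≤ m) :
    chi k 1 * chi k m = chi k (m + 1) +
      ∑ T ∈ listSet k (m - 1),
        (Finset.univ.filter (fun c : Fin k × Bool => T.head? ≠ some c)).card •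
          MonoidAlgebra.of ℂ (FreeGroup (Fin k)) (FreeGroup.mk T) := by
  rw [chi_one, chi_eq k m, Finset.sum_mul_sum]
  have hmul : ∀ (c : Fin k × Bool) (L : List (Fin k × Bool)),
      MonoidAlgebra.of ℂ (FreeGroup (Fin k)) (FreeGroup.mk [c]) *
        MonoidAlgebra.of ℂ (FreeGroup (Fin k)) (FreeGroup.mk L)
      = MonoidAlgebra.of ℂ (FreeGroup (Fin k)) (FreeGroup.mk (c :: L)) := by
    intro c L
    rw [← map_mul, FreeGroup.mul_mk]
    rfl
  simp only [hmul]
  rw [← Finset.sum_product']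
  rw [← Finset.sum_filter_add_sum_filter_not (Finset.univ ×ˢ listSet k m)
    (fun p => p.2.head? = some (p.1.1, !p.1.2))
    (fun p => MonoidAlgebra.of ℂ (FreeGroup (Fin k)) (FreeGroup.mk (p.1 :: p.2))),
    add_comm]
  congr 1
  · -- no-cancellation part gives chi k (m+1)
    rw [chi_eq]
    refine Finset.sum_bij' (fun p _ => p.1 :: p.2)
      (fun M hM => (M.head (by
          intro hnil
          have h1 := (mem_listSet.mp hM).1
          rw [hnil] at h1
          simp at h1), M.tail)) ?_ ?_ ?_ ?_ ?_
    · intro p hp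
      rw [Finset.mem_filter] at hp
      obtain ⟨hmem, hnP⟩ := hp
      obtain ⟨hlen, hred⟩ := mem_listSet.mp (Finset.mem_product.mp hmem).2
      refine mem_listSet.mpr ⟨by simp [hlen], reduced_cons_iff.mpr ⟨hred, ?_⟩⟩
      intro e he hce
      apply hnP
      have he2 : e = (p.1.1, !p.1.2) := by
        obtain ⟨h1, h2⟩ := hce
        refine Prod.ext h1.symm ?_
        rw [h2, Bool.not_not]
      rw [Option.mem_def] at he
      rw [he, he2]
    · intro M hM
      obtain ⟨hlen, hred⟩ := mem_listSet.mp hM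
      have hne : M ≠ [] := by
        intro hnil; rw [hnil] at hlen; simp at hlen
      have hM' : M.head hne :: M.tail = M := List.cons_head_tail hne
      have hred' : FreeGroup.reduce (M.head hne :: M.tail) = M.head hne :: M.tail := by
        rw [hM']; exact hred
      obtain ⟨hrt, hcond⟩ := reduced_cons_iff.mp hred'
      rw [Finset.mem_filter, Finset.mem_product]
      refine ⟨⟨Finset.mem_univ _, mem_listSet.mpr ⟨?_, hrt⟩⟩, ?_⟩
      · rw [List.length_tail, hlen]
        omega
      · intro hq
        exact hcond _ hq ⟨rfl, (Bool.not_not _).symm⟩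
      
    · intro p hp
      simp
    · intro M hM
      exact List.cons_head_tail _
    · intro p hp
      rfl
  · -- cancellation part
    have step1 : ∑ p ∈ (Finset.univ ×ˢ listSet k m).filter
          (fun p => p.2.head? = some (p.1.1, !p.1.2)),
        MonoidAlgebra.of ℂ (FreeGroup (Fin k)) (FreeGroup.mk (p.1 :: p.2))
        = ∑ q ∈ (Finset.univ ×ˢ listSet k (m - 1)).filter
          (fun q : (Fin k × Bool) × List (Fin k × Bool) => q.2.head? ≠ some q.1),
        MonoidAlgebra.of ℂ (FreeGroup (Fin k)) (FreeGroup.mk q.2) := by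
      refine Finset.sum_bij' (fun p _ => (p.1, p.2.tail))
        (fun q _ => (q.1, (q.1.1, !q.1.2) :: q.2)) ?_ ?_ ?_ ?_ ?_
      · intro p hp
        rw [Finset.mem_filter] at hp
        obtain ⟨hmem, hP⟩ := hp
        obtain ⟨hlen, hred⟩ := mem_listSet.mp (Finset.mem_product.mp hmem).2
        have hsh : p.2 = (p.1.1, !p.1.2) :: p.2.tail := head?_cons_eq hP
        have hred' := hred
        rw [hsh] at hred'
        nth_rewrite 2 [hsh] at hred'
        obtain ⟨hrt, hcond⟩ := reduced_cons_iff.mp hred'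
        rw [Finset.mem_filter, Finset.mem_product]
        refine ⟨⟨Finset.mem_univ _, mem_listSet.mpr ⟨?_, hrt⟩⟩, ?_⟩
        · rw [List.length_tail, hlen]
        · intro hq
          exact hcond _ hq ⟨rfl, rfl⟩
      · intro q hq
        rw [Finset.mem_filter] at hq
        obtain ⟨hmem, hQ⟩ := hq
        obtain ⟨hlen, hred⟩ := mem_listSet.mp (Finset.mem_product.mp hmem).2
        rw [Finset.mem_filter, Finset.mem_product]
        refine ⟨⟨Finset.mem_univ _, mem_listSet.mpr ⟨?_, ?_⟩⟩, ?_⟩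
        · simp only [List.length_cons, hlen]
          omega
        · refine reduced_cons_iff.mpr ⟨hred, ?_⟩
          intro e he hce
          apply hQ
          obtain ⟨h1, h2⟩ := hce
          have he2 : e = q.1 := by
            refine Prod.ext h1.symm ?_
            exact (Bool.not_inj h2).symm
          rw [Option.mem_def] at he
          rw [he, he2]
        · rfl
      · intro p hp
        rw [Finset.mem_filter] at hp
        have hsh : p.2 = (p.1.1, !p.1.2) :: p.2.tail := head?_cons_eq hp.2
        exact Prod.ext rfl hsh.symm
      · intro q hq
        rfl
      · intro p hp
        rw [Finset.mem_filter] at hp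
        have hsh : p.2 = (p.1.1, !p.1.2) :: p.2.tail := head?_cons_eq hp.2
        nth_rewrite 1 [hsh]
        rw [mk_cons_cancel p.1 p.2.tail]
    rw [step1, Finset.sum_filter, Finset.sum_product_right]
    refine Finset.sum_congr rfl ?_
    intro T hT
    have h1 : ∑ a ∈ Finset.filter
          (fun a : Fin k × Bool => (a, T).2.head? ≠ some (a, T).1) Finset.univ,
        (MonoidAlgebra.of ℂ (FreeGroup (Fin k))) (FreeGroup.mk (a, T).2)
        = ∑ _a ∈ Finset.filter (fun c : Fin k × Bool => T.head? ≠ some c) Finset.univ,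
        (MonoidAlgebra.of ℂ (FreeGroup (Fin k))) (FreeGroup.mk T) := rfl
    rw [← Finset.sum_filter, h1, Finset.sum_const]

lemma card_filter_nil (k : ℕ) :
    (Finset.univ.filter (fun c : Fin k × Bool =>
      ([] : List (Fin k × Bool)).head? ≠ some c)).card = 2 * k := by
  simp [Finset.filter_true_of_mem, Fintype.card_prod, Nat.mul_comm]

lemma card_filter_cons (k : ℕ) (d : Fin k × Bool) (t : List (Fin k × Bool)) :
    (Finset.univ.filter (fun c : Fin k × Bool =>
      (d :: t).head? ≠ some c)).card = 2 * k - 1 := by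
  have h1 : (Finset.univ.filter (fun c : Fin k × Bool => (d :: t).head? ≠ some c))
      = Finset.univ.erase d := by
    ext c; simp [eq_comm]
  rw [h1, Finset.card_erase_of_mem (Finset.mem_univ d)]
  simp [Fintype.card_prod, Nat.mul_comm]

lemma rec1 (k : ℕ) : chi k 1 * chi k 1
    = chi k 2 + (2 * k) • (1 : MonoidAlgebra ℂ (FreeGroup (Fin k))) := by
  have h := key k 1 le_rfl
  rw [show (1 : ℕ) - 1 = 0 from rfl, listSet_zero] at h
  rw [Finset.sum_singleton] at h
  rw [h, card_filter_nil, ← FreeGroup.one_eq_mk, map_one]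

lemma rec2 (k n : ℕ) : chi k 1 * chi k (n + 2)
    = chi k (n + 3) + (2 * k - 1) • chi k (n + 1) := by
  have h := key k (n + 2) (by omega)
  rw [show n + 2 - 1 = n + 1 from rfl] at h
  rw [h]
  congr 1
  rw [chi_eq k (n + 1), Finset.smul_sum]
  refine Finset.sum_congr rfl (fun T hT => ?_)
  obtain ⟨hlen, -⟩ := mem_listSet.mp hT
  obtain ⟨d, t, rfl⟩ : ∃ d t, T = d :: t := by
    cases T with
    | nil => simp at hlen
    | cons d t => exact ⟨d, t, rfl⟩
  rw [card_filter_cons]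

/-- `χ_n = p_n(χ_1)` in the group ring `ℂ[F_k]`. -/
theorem stmt12 (k : ℕ) (hk : 2 ≤ k) (n : ℕ) :
    chi k n = Polynomial.aeval (chi k 1) (p k n) := by
  induction n using Nat.strong_induction_on with
  | _ n ih =>
    obtain _ | (_ | (_ | m)) := n
    · rw [chi_zero, show p k 0 = 1 from rfl, map_one]
    · rw [show p k 1 = Polynomial.X from rfl, Polynomial.aeval_X]
    · rw [show p k 2 = Polynomial.X ^ 2 - Polynomial.C ((2 * k : ℕ) : ℂ) from rfl,
        map_sub, map_pow, Polynomial.aeval_X, Polynomial.aeval_C]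
      have h2 : chi k 2 = chi k 1 * chi k 1 - (2 * k) • 1 :=
        eq_sub_of_add_eq (rec1 k).symm
      rw [h2, pow_two]
      congr 1
      rw [Algebra.algebraMap_eq_smul_one, Nat.cast_smul_eq_nsmul]
    · rw [show p k (m + 3)
          = Polynomial.X * p k (m + 2) - Polynomial.C ((2 * k - 1 : ℕ) : ℂ) * p k (m + 1)
        from rfl,
        map_sub, map_mul, map_mul, Polynomial.aeval_X, Polynomial.aeval_C,
        ← ih (m + 2) (by omega), ← ih (m + 1) (by omega)]
      have h3 : algebraMap ℂ (MonoidAlgebra ℂ (FreeGroup (Fin k))) ((2 * k - 1 : ℕ) : ℂ)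
          * chi k (m + 1) = (2 * k - 1) • chi k (m + 1) := by
        rw [← Algebra.smul_def, Nat.cast_smul_eq_nsmul]
      rw [h3, rec2 k m, add_sub_cancel_right]
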